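/- For a finite simple graph G with Laplacian L and any positive integer k, det(I + k·L) equals the number of rooted spanning forests of G whose edges are each colored with one of k colors. -/

import Mathlib

open Matrix SimpleGraph Finset

/-- A rooted `k`-colored spanning forest of `G`: a spanning subforest `H ≤ G`,
a root assignment sending each vertex to the root of its tree (constant on
components and reachable from each vertex), and a `k`-coloring of its edges. -/
structure RootedColoredForest {V : Type*} (G : SimpleGraph V) (k : ℕ) where
  H : SimpleGraph V
  le : H ≤ G
  acyclic : H.IsAcyclic
  root : V → V
  reach_root : ∀ v, H.Reachable v (root v)
  root_const : ∀ u v, H.Reachable u v → root u = root v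
  color : H.edgeSet → Fin k

theorem Equiv.Perm.apply_inv_self {α : Type*} (f : Equiv.Perm α) (x : α) : f (f⁻¹ x) = x :=
  f.apply_symm_apply x

namespace RCFAux

variable {n : ℕ}

/-- Acyclicity of a functional digraph: every periodic point is fixed. -/
def Acyc (c : Fin n → Fin n) : Prop := ∀ x m, c^[m + 1] x = x → c x = x

def B (c : Fin n → Fin n) : Matrix (Fin n) (Fin n) ℤ :=
  Matrix.of fun i j => (if j = i then 1 else 0) - (if c i = j ∧ c i ≠ i then 1 else 0)

lemma detB_acyclic {c : Fin n → Fin n} (hc : Acyc c) : (B c).det = 1 := by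
  rw [Matrix.det_apply]
  rw [Finset.sum_eq_single (1 : Equiv.Perm (Fin n))]
  · simp [B]
  · intro σ _ hσ
    have h0 : ∏ i, B c (σ i) i = 0 := by
      by_contra hprod
      have hne : ∀ i, B c (σ i) i ≠ 0 := by
        intro i h
        exact hprod (Finset.prod_eq_zero (Finset.mem_univ i) h)
      have key : ∀ i, σ i = i ∨ c (σ i) = i := by
        intro i
        by_contra h
        push_neg at h
        refine hne i ?_
        have h1 : i ≠ σ i := fun h' => h.1 h'.symm
        simp [B, h1, h.2]
      have hmoved : ∀ z, σ z ≠ z → c z = σ⁻¹ z := by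
        intro z hz
        rcases key (σ⁻¹ z) with h | h
        · rw [Equiv.Perm.apply_inv_self] at h
          refine absurd ?_ hz
          conv_lhs => rw [h]
          exact Equiv.Perm.apply_inv_self σ z
        · rwa [Equiv.Perm.apply_inv_self] at h
      obtain ⟨x, hx⟩ : ∃ x, σ x ≠ x := by
        by_contra h
        push_neg at h
        exact hσ (Equiv.ext h)
      have iter : ∀ m : ℕ, c^[m] x = (σ ^ m)⁻¹ x ∧ σ (c^[m] x) ≠ c^[m] x := by
        intro m
        induction m with
        | zero => simpa using hx
        | succ m ih =>
          have h1 : c^[m + 1] x = σ⁻¹ (c^[m] x) := by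
            rw [Function.iterate_succ_apply', hmoved _ ih.2]
          have h2 : c^[m + 1] x = (σ ^ (m + 1))⁻¹ x := by
            rw [h1, ih.1, pow_succ, _root_.mul_inv_rev]; rfl
          refine ⟨h2, ?_⟩
          rw [h1]
          intro h3
          rw [Equiv.Perm.apply_inv_self] at h3
          refine ih.2 ?_
          nth_rewrite 1 [h3]
          exact Equiv.Perm.apply_inv_self σ _
      have hord : σ ^ (orderOf σ) = 1 := pow_orderOf_eq_one σ
      have hpos : 0 < orderOf σ := orderOf_pos σ
      obtain ⟨m, hm⟩ : ∃ m, orderOf σ = m + 1 := ⟨orderOf σ - 1, (Nat.succ_pred_eq_of_pos hpos).symm⟩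
      have hx' : c^[m + 1] x = x := by
        rw [(iter (m + 1)).1, ← hm, hord]; rfl
      have : c x = x := hc x m hx'
      rw [hmoved x hx] at this
      refine hx ?_
      nth_rewrite 1 [← this]
      exact Equiv.Perm.apply_inv_self σ x
    rw [h0, smul_zero]
  · intro h
    exact absurd (Finset.mem_univ 1) h

lemma detB_cyclic {c : Fin n → Fin n} (x : Fin n) (m : ℕ)
    (hper : c^[m + 1] x = x) (hcx : c x ≠ x) : (B c).det = 0 := by
  rw [← Matrix.exists_vecMul_eq_zero_iff]
  classical
  set O : Finset (Fin n) := (Finset.range (m + 1)).image (fun t => c^[t] x) with hO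
  have hxO : x ∈ O := by
    refine Finset.mem_image.2 ⟨0, by simp, rfl⟩
  have hmem : ∀ y ∈ O, ∃ t, t ≤ m ∧ y = c^[t] x := by
    intro y hy
    obtain ⟨t, ht, rfl⟩ := Finset.mem_image.1 hy
    exact ⟨t, Nat.lt_succ_iff.1 (Finset.mem_range.1 ht), rfl⟩
  have hcO : ∀ y ∈ O, c y ∈ O := by
    intro y hy
    obtain ⟨t, ht, rfl⟩ := hmem y hy
    rcases Nat.lt_or_ge t m with h | h
    · exact Finset.mem_image.2 ⟨t + 1, Finset.mem_range.2 (by omega),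
        Function.iterate_succ_apply' c t x⟩
    · have : t = m := le_antisymm ht h
      subst this
      rw [← Function.iterate_succ_apply' c t x, hper]
      exact hxO
  have hsurj : O ⊆ O.image c := by
    intro y hy
    obtain ⟨t, ht, rfl⟩ := hmem y hy
    rcases Nat.eq_zero_or_pos t with rfl | hpos
    · refine Finset.mem_image.2 ⟨c^[m] x, ?_, ?_⟩
      · exact Finset.mem_image.2 ⟨m, Finset.mem_range.2 (by omega), rfl⟩
      · rw [← Function.iterate_succ_apply' c m x, hper]; rfl
    · refine Finset.mem_image.2 ⟨c^[t - 1] x, ?_, ?_⟩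
      · exact Finset.mem_image.2 ⟨t - 1, Finset.mem_range.2 (by omega), rfl⟩
      · rw [← Function.iterate_succ_apply' c (t - 1) x]
        congr 1
        omega
  have himage : O.image c = O := by
    apply Finset.Subset.antisymm _ hsurj
    intro y hy
    obtain ⟨z, hz, rfl⟩ := Finset.mem_image.1 hy
    exact hcO z hz
  have hinj : Set.InjOn c O := Finset.injOn_of_card_image_eq (by rw [himage])
  have hfix : ∀ y ∈ O, c y ≠ y := by
    intro y hy hcy
    obtain ⟨t, ht, rfl⟩ := hmem y hy
    have hyfix : ∀ s : ℕ, c^[s] (c^[t] x) = c^[t] x := by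
      intro s
      induction s with
      | zero => rfl
      | succ s ih => rw [Function.iterate_succ_apply', ih, hcy]
    have hxy : x = c^[t] x := by
      conv_lhs => rw [← hper]
      have : m + 1 = (m + 1 - t) + t := by omega
      rw [this, Function.iterate_add_apply, hyfix]
    exact hcx (by rw [hxy, hcy])
  refine ⟨fun j => if j ∈ O then 1 else 0, ?_, ?_⟩
  · intro h
    have := congrFun h x
    simp [hxO] at this
  · funext j
    show ((fun j0 => if j0 ∈ O then (1:ℤ) else 0) ᵥ* B c) j = 0
    rw [Matrix.vecMul, dotProduct]
    have hv : ∀ i : Fin n, (if i ∈ O then (1:ℤ) else 0) * B c i j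
        = if i ∈ O then B c i j else 0 := by
      intro i; split <;> simp
    rw [Finset.sum_congr rfl fun i _ => hv i]
    rw [Finset.sum_ite_mem, Finset.univ_inter]
    have hB : ∀ i ∈ O, B c i j = (if j = i then 1 else 0) - (if c i = j then 1 else 0) := by
      intro i hi
      simp only [B, Matrix.of_apply, and_iff_left (hfix i hi)]
    rw [Finset.sum_congr rfl hB, Finset.sum_sub_distrib]
    have h1 : ∑ i ∈ O, (if j = i then (1:ℤ) else 0) = if j ∈ O then 1 else 0 := by
      simp [Finset.sum_ite_eq, Finset.sum_ite_eq']
    have h2 : ∑ i ∈ O, (if c i = j then (1:ℤ) else 0) = if j ∈ O then 1 else 0 := by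
      have hi := Finset.sum_image (f := fun z => if z = j then (1:ℤ) else 0) (g := c) (s := O)
        (fun a ha b hb h => hinj ha hb h)
      rw [himage] at hi
      beta_reduce at hi
      rw [← hi]
      simp [Finset.sum_ite_eq, Finset.sum_ite_eq']
    rw [h1, h2, sub_self]


def Good (G : SimpleGraph (Fin n)) (c : Fin n → Fin n) : Prop :=
  (∀ i, c i ≠ i → G.Adj i (c i)) ∧ Acyc c

section Det

variable (G : SimpleGraph (Fin n)) [DecidableRel G.Adj] (k : ℕ)

def gRow (i m : Fin n) : Fin n → ℤ :=
  (if m = i then Pi.single i 1 else 0) +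
    (if G.Adj i m then (k : ℤ) • (Pi.single i 1 - Pi.single m 1) else 0)

lemma rows_eq : (1 + (k:ℤ) • G.lapMatrix ℤ) = Matrix.of fun i => ∑ m, gRow G k i m := by
  ext i j
  have hsum : (∑ m, gRow G k i m) j
      = (if j = i then 1 else 0)
        + ((k:ℤ) * ∑ m, (if G.Adj i m then
            (if j = i then 1 else 0) - (if j = m then 1 else 0) else 0)) := by
    simp only [gRow, Finset.sum_apply, Pi.add_apply,
      apply_ite (fun f : Fin n → ℤ => f j), Pi.zero_apply, Pi.smul_apply, Pi.sub_apply,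
      Pi.single_apply, smul_eq_mul, Finset.sum_add_distrib, Finset.sum_ite_eq', Finset.mem_univ,
      if_true, Finset.mul_sum, mul_ite, mul_zero]
  rw [Matrix.of_apply, hsum]
  simp only [Matrix.add_apply, Matrix.one_apply, Matrix.smul_apply, smul_eq_mul,
    SimpleGraph.lapMatrix, Matrix.sub_apply, SimpleGraph.degMatrix, Matrix.diagonal_apply,
    SimpleGraph.adjMatrix_apply]
  by_cases hij : i = j
  · subst hij
    simp only [if_pos rfl, G.irrefl, if_false, if_neg (G.irrefl), sub_zero]
    simp only [if_pos trivial]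
    congr 1
    rw [G.degree_eq_sum_if_adj i]
    rw [Finset.mul_sum, Finset.mul_sum]
    refine Finset.sum_congr rfl fun m _ => ?_
    by_cases h : G.Adj i m
    · have hne : ¬ i = m := G.ne_of_adj h
      simp [h, hne]
    · simp [h]
  · have hji : ¬ j = i := fun h => hij h.symm
    simp only [if_neg hij, if_neg hji, zero_sub, zero_add]
    rw [Finset.mul_sum]
    rw [Finset.sum_eq_single j]
    · by_cases h : G.Adj i j
      · simp [h, hji]
      · simp [h]
    · intro m _ hm
      by_cases h : G.Adj i m
      · simp [h, hji, Ne.symm hm]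
      · simp [h]
    · intro h
      exact absurd (Finset.mem_univ j) h

lemma det_expand :
    (1 + (k:ℤ) • G.lapMatrix ℤ).det
      = ∑ c : Fin n → Fin n, Matrix.det (Matrix.of fun i => gRow G k i (c i)) := by
  rw [rows_eq]
  have h := (Matrix.detRowAlternating (n := Fin n) (R := ℤ)).toMultilinearMap.map_sum
    (α := fun _ => Fin n) (g := fun i m => gRow G k i m)
  exact h

lemma det_term_admissible (c : Fin n → Fin n) (hadm : ∀ i, c i ≠ i → G.Adj i (c i)) :
    Matrix.det (Matrix.of fun i => gRow G k i (c i))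
      = (k:ℤ) ^ #(Finset.univ.filter fun i => c i ≠ i) * (B c).det := by
  have hrow : (Matrix.of fun i => gRow G k i (c i))
      = Matrix.of (fun i j => (if c i = i then (1:ℤ) else (k:ℤ)) * B c i j) := by
    ext i j
    simp only [Matrix.of_apply]
    by_cases h : c i = i
    · simp [gRow, h, B, G.irrefl, Pi.single_apply]
    · have hadj := hadm i h
      simp only [gRow, if_neg h, if_pos hadj, B, Matrix.of_apply, Pi.add_apply, Pi.zero_apply,
        Pi.smul_apply, Pi.sub_apply, Pi.single_apply, smul_eq_mul, zero_add, and_iff_left h]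
      by_cases hj : j = c i
      · simp [hj]
      · have h2 : ¬ c i = j := fun hh => hj hh.symm
        simp [hj, h2]
  rw [hrow]
  rw [Matrix.det_mul_column]
  congr 1
  rw [Finset.prod_ite, Finset.prod_const, Finset.prod_const, one_pow, one_mul]

lemma det_side [DecidablePred (Good G)] :
    (1 + (k:ℤ) • G.lapMatrix ℤ).det
      = ∑ c ∈ Finset.univ.filter (Good G),
          (k:ℤ) ^ #(Finset.univ.filter fun i => c i ≠ i) := by
  rw [det_expand]
  rw [← Finset.sum_filter_add_sum_filter_not Finset.univ (Good G)
    (fun c => Matrix.det (Matrix.of fun i => gRow G k i (c i)))]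
  have h2 : ∑ c ∈ Finset.univ.filter (fun c => ¬ Good G c),
      Matrix.det (Matrix.of fun i => gRow G k i (c i)) = 0 := by
    refine Finset.sum_eq_zero fun c hc => ?_
    rw [Finset.mem_filter] at hc
    rw [Good, not_and_or] at hc
    rcases hc.2 with h | h
    · push_neg at h
      obtain ⟨i, hne, hnadj⟩ := h
      refine Matrix.det_eq_zero_of_row_eq_zero i fun j => ?_
      have : ¬ c i = i := hne
      simp [gRow, this, hnadj]
    · rw [Acyc] at h
      push_neg at h
      obtain ⟨x, m, hper, hfixne⟩ := h
      by_cases hadm : ∀ i, c i ≠ i → G.Adj i (c i)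
      · rw [det_term_admissible G k c hadm, detB_cyclic x m hper hfixne, mul_zero]
      · push_neg at hadm
        obtain ⟨i, hne, hnadj⟩ := hadm
        refine Matrix.det_eq_zero_of_row_eq_zero i fun j => ?_
        have : ¬ c i = i := hne
        simp [gRow, this, hnadj]
  rw [h2, add_zero]
  refine Finset.sum_congr rfl fun c hc => ?_
  rw [Finset.mem_filter] at hc
  rw [det_term_admissible G k c hc.2.1, detB_acyclic hc.2.2, mul_one]

end Det

/-- The graph of a functional digraph. -/
def Hc (c : Fin n → Fin n) : SimpleGraph (Fin n) where
  Adj a b := (c a = b ∨ c b = a) ∧ a ≠ b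
  symm := ⟨by
    intro a b h
    exact ⟨h.1.symm, h.2.symm⟩⟩
  loopless := ⟨fun a h => h.2 rfl⟩

lemma hc_adj {c : Fin n → Fin n} {a b : Fin n} :
    (Hc c).Adj a b ↔ (c a = b ∨ c b = a) ∧ a ≠ b := Iff.rfl

lemma adj_self_c {c : Fin n → Fin n} {v : Fin n} (h : c v ≠ v) : (Hc c).Adj v (c v) :=
  ⟨Or.inl rfl, fun hv => h hv.symm⟩

section Acyclic

variable {c : Fin n → Fin n} (hc : Acyc c)
include hc

lemma iterate_n_fixed (v : Fin n) : c (c^[n] v) = c^[n] v := by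
  have key : ∃ i : ℕ, i ≤ n ∧ c (c^[i] v) = c^[i] v := by
    obtain ⟨i, j, hne, hij⟩ := Fintype.exists_ne_map_eq_of_card_lt
      (fun i : Fin (n + 1) => c^[(i : ℕ)] v) (by simp [v.pos])
    have hne' : (i : ℕ) ≠ (j : ℕ) := fun h => hne (Fin.val_injective h)
    wlog h : (i : ℕ) < (j : ℕ) generalizing i j
    · exact this j i hne.symm hij.symm hne'.symm (by omega)
    have hper : c^[(j : ℕ) - (i : ℕ)] (c^[(i : ℕ)] v) = c^[(i : ℕ)] v := by
      rw [← Function.iterate_add_apply, Nat.sub_add_cancel h.le]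
      exact hij.symm
    obtain ⟨m, hm⟩ : ∃ m, (j : ℕ) - (i : ℕ) = m + 1 := ⟨(j : ℕ) - i - 1, by omega⟩
    refine ⟨i, by omega, hc _ m ?_⟩
    rw [← hm]
    exact hper
  obtain ⟨i, hin, hfix⟩ := key
  have h2 := Function.iterate_add_apply c (n - i) i v
  rw [Nat.sub_add_cancel hin] at h2
  rw [Function.iterate_fixed hfix] at h2
  rw [h2, hfix]

lemma reach_iterate (v : Fin n) (m : ℕ) : (Hc c).Reachable v (c^[m] v) := by
  induction m with
  | zero => exact Reachable.refl v
  | succ m ih =>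
    refine ih.trans ?_
    rw [Function.iterate_succ_apply']
    by_cases h : c (c^[m] v) = c^[m] v
    · rw [h]
    · exact (adj_self_c h).reachable

lemma root_const_adj {u v : Fin n} (h : (Hc c).Adj u v) : c^[n] u = c^[n] v := by
  rcases h.1 with h1 | h1
  · rw [← h1, ← Function.iterate_succ_apply, Function.iterate_succ_apply',
      iterate_n_fixed hc u]
  · rw [← h1, ← Function.iterate_succ_apply, Function.iterate_succ_apply',
      iterate_n_fixed hc v]

lemma root_const_reach {u v : Fin n} (h : (Hc c).Reachable u v) : c^[n] u = c^[n] v := by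
  obtain ⟨w⟩ := h
  induction w with
  | nil => rfl
  | cons hadj _ ih => exact (root_const_adj hc hadj).trans ih

/-- The height of a vertex: number of steps to reach the root. -/
noncomputable def ht (v : Fin n) : ℕ :=
  Nat.find (⟨n, iterate_n_fixed hc v⟩ : ∃ m, c (c^[m] v) = c^[m] v)

lemma ht_spec (v : Fin n) : c (c^[ht hc v] v) = c^[ht hc v] v :=
  Nat.find_spec (⟨n, iterate_n_fixed hc v⟩ : ∃ m, c (c^[m] v) = c^[m] v)

lemma ht_eq_zero {v : Fin n} (h : c v = v) : ht hc v = 0 := by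
  simp [ht, Nat.find_eq_zero, h]

lemma ht_succ {v : Fin n} (h : c v ≠ v) : ht hc v = ht hc (c v) + 1 := by
  have hP : ∀ m : ℕ, (c (c^[m] (c v)) = c^[m] (c v)) ↔ (c (c^[m + 1] v) = c^[m + 1] v) := by
    intro m
    rw [Function.iterate_succ_apply]
  have h1 : 0 < ht hc v := by
    rcases Nat.eq_zero_or_pos (ht hc v) with h0 | h0
    · exfalso
      have := ht_spec hc v
      rw [h0] at this
      exact h this
    · exact h0
  apply le_antisymm
  · exact Nat.find_le ((hP (ht hc (c v))).1 (ht_spec hc (c v)))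
  · have h2 : c (c^[(ht hc v - 1) + 1] v) = c^[(ht hc v - 1) + 1] v := by
      have h3 : ht hc v - 1 + 1 = ht hc v := by omega
      rw [h3]
      exact ht_spec hc v
    have h4 : ht hc (c v) ≤ ht hc v - 1 := Nat.find_le ((hP (ht hc v - 1)).2 h2)
    omega

lemma adj_ht {u v : Fin n} (h : (Hc c).Adj u v) :
    (c u = v ∧ ht hc u = ht hc v + 1) ∨ (c v = u ∧ ht hc v = ht hc u + 1) := by
  rcases h.1 with h1 | h1
  · left
    refine ⟨h1, ?_⟩
    have : c u ≠ u := by rw [h1]; exact fun hh => h.2 hh.symm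
    rw [ht_succ hc this, h1]
  · right
    refine ⟨h1, ?_⟩
    have : c v ≠ v := by rw [h1]; exact h.2
    rw [ht_succ hc this, h1]

lemma hc_isAcyclic : (Hc c).IsAcyclic := by
  intro v p hp
  -- choose a vertex of maximal height on the cycle
  obtain ⟨w, hwmem, hwmax⟩ := Finset.exists_max_image p.support.toFinset (ht hc)
    ⟨v, List.mem_toFinset.2 p.start_mem_support⟩
  have hw : w ∈ p.support := List.mem_toFinset.1 hwmem
  have hmax : ∀ z, z ∈ p.support → ht hc z ≤ ht hc w := fun z hz =>
    hwmax z (List.mem_toFinset.2 hz)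
  obtain ⟨q, hq, hqsup⟩ : ∃ q : (Hc c).Walk w w, q.IsCycle ∧ ∀ z ∈ q.support, z ∈ p.support := by
    refine ⟨p.rotate w hw, hp.rotate hw, ?_⟩
    intro z hz
    rcases List.eq_or_mem_of_mem_cons (((p.rotate w hw).support_eq_cons) ▸ hz) with rfl | hz'
    · exact hw
    · have hrot := SimpleGraph.Walk.support_rotate p w hw
      have := hrot.mem_iff.1 hz'
      exact List.mem_of_mem_tail this
  clear hwmem hwmax hw
  cases q with
  | nil =>
    have := hq.three_le_length
    simp at this
  | @cons _ x _ hadj q' =>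
    have hlen : 3 ≤ (SimpleGraph.Walk.cons hadj q').length := hq.three_le_length
    rw [SimpleGraph.Walk.cons_isCycle_iff] at hq
    have hq'path : q'.IsPath := hq.1
    have hlen' : 2 ≤ q'.length := by
      simp only [SimpleGraph.Walk.length_cons] at hlen
      omega
    -- the other neighbor of w
    have hq'rev_notnil : ¬ q'.reverse.Nil := by
      rw [SimpleGraph.Walk.nil_iff_length_eq, SimpleGraph.Walk.length_reverse]
      omega
    set y := q'.reverse.getVert 1 with hydef
    have hadjwy : (Hc c).Adj w y := q'.reverse.adj_snd hq'rev_notnil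
    have hymem : y ∈ q'.support := by
      have : y ∈ q'.reverse.support := by
        rw [SimpleGraph.Walk.mem_support_iff_exists_getVert]
        exact ⟨1, rfl, by rw [SimpleGraph.Walk.length_reverse]; omega⟩
      rwa [SimpleGraph.Walk.support_reverse, List.mem_reverse] at this
    have hxmem : x ∈ q'.support := q'.start_mem_support
    -- maximality forces both edges to point away from w
    have hcx : c w = x := by
      rcases adj_ht hc hadj with ⟨h1, _⟩ | ⟨_, h2⟩
      · exact h1
      · exfalso
        have : x ∈ p.support := hqsup x (by simp [SimpleGraph.Walk.support_cons, hxmem])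
        have := hmax x this
        omega
    have hcy : c w = y := by
      rcases adj_ht hc hadjwy with ⟨h1, _⟩ | ⟨_, h2⟩
      · exact h1
      · exfalso
        have : y ∈ p.support := hqsup y (by simp [SimpleGraph.Walk.support_cons, hymem])
        have := hmax y this
        omega
    have hxy : x = y := by rw [← hcx, hcy]
    -- but the second and second-to-last vertices of a cycle differ
    -- q'.reverse : Walk w x, y = its second vertex; y = x leads to a path from x to x
    have : (q'.reverse.tail.copy (hydef ▸ hxy.symm : q'.reverse.getVert 1 = x) rfl).IsPath := by
      simp only [SimpleGraph.Walk.isPath_copy]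
      exact (hq'path.reverse).tail
    have hnil : (q'.reverse.tail.copy (hydef ▸ hxy.symm : q'.reverse.getVert 1 = x) rfl) =
        SimpleGraph.Walk.nil := by
      have hloop := SimpleGraph.Path.loop_eq ⟨_, this⟩
      have := congrArg Subtype.val hloop
      exact this
    have : q'.reverse.tail.length = 0 := by
      have := congrArg SimpleGraph.Walk.length hnil
      simpa using this
    have : q'.reverse.length = 1 := by
      have h1 := SimpleGraph.Walk.length_tail_add_one hq'rev_notnil
      omega
    rw [SimpleGraph.Walk.length_reverse] at this
    omega

end Acyclic


section Bij

variable (G : SimpleGraph (Fin n)) (k : ℕ)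

noncomputable def edgeEquiv {c : Fin n → Fin n} (hc : Acyc c) :
    {i : Fin n // c i ≠ i} ≃ (Hc c).edgeSet := by
  refine Equiv.ofBijective
    (fun i => ⟨s(i.1, c i.1), by rw [SimpleGraph.mem_edgeSet]; exact adj_self_c i.2⟩) ⟨?_, ?_⟩
  · rintro ⟨i, hi⟩ ⟨j, hj⟩ hij
    simp only [Subtype.mk.injEq, Sym2.eq, Sym2.rel_iff', Prod.mk.injEq, Prod.swap_prod_mk] at hij
    rcases hij with ⟨h1, _⟩ | ⟨h1, h2⟩
    · exact Subtype.ext h1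
    · exfalso
      apply hj
      refine hc j 1 ?_
      show c (c (c^[0] j)) = j
      rw [Function.iterate_zero_apply, ← h1, h2]
  · rintro ⟨e, he⟩
    revert he
    refine Sym2.ind (fun a b => ?_) e
    intro he
    rw [SimpleGraph.mem_edgeSet, hc_adj] at he
    obtain ⟨h1 | h1, hne⟩ := he
    · refine ⟨⟨a, by rw [h1]; exact fun h => hne h.symm⟩, ?_⟩
      apply Subtype.ext
      simp only
      rw [h1]
    · refine ⟨⟨b, by rw [h1]; exact hne⟩, ?_⟩
      apply Subtype.ext
      simp only
      rw [h1, Sym2.eq_swap]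

noncomputable def Psi
    (x : Σ c : {c : Fin n → Fin n // Good G c}, ({i : Fin n // c.1 i ≠ i} → Fin k)) :
    RootedColoredForest G k where
  H := Hc x.1.1
  le := by
    rintro a b ⟨h1 | h1, hne⟩
    · exact h1 ▸ x.1.2.1 a (by rw [h1]; exact fun h => hne h.symm)
    · exact (h1 ▸ x.1.2.1 b (by rw [h1]; exact hne)).symm
  acyclic := hc_isAcyclic x.1.2.2
  root := fun v => (x.1.1)^[n] v
  reach_root := fun v => reach_iterate x.1.2.2 v n
  root_const := fun u v h => root_const_reach x.1.2.2 h
  color := fun e => x.2 ((edgeEquiv x.1.2.2).symm e)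

lemma Psi_injective : Function.Injective (Psi G k) := by
  rintro ⟨⟨c, hc⟩, col⟩ ⟨⟨c', hc'⟩, col'⟩ heq
  simp only [Psi, RootedColoredForest.mk.injEq] at heq
  obtain ⟨hH, hroot, hcol⟩ := heq
  have hfix_iff : ∀ v, c v = v → c' v = v := by
    intro v hv
    have h1 : c^[n] v = v := Function.iterate_fixed hv n
    have h2 : c'^[n] v = v := by rw [← congrFun hroot v, h1]
    obtain ⟨m, hm⟩ : ∃ m, n = m + 1 := ⟨n - 1, by have := v.pos; omega⟩
    exact hc'.2 v m (by rw [← hm]; exact h2)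
  have hcc : c = c' := by
    have main : ∀ N v, ht hc.2 v ≤ N → c v = c' v := by
      intro N
      induction N with
      | zero =>
        intro v hv
        have h0 : ht hc.2 v = 0 := Nat.le_zero.mp hv
        have hfix : c v = v := by
          have := ht_spec hc.2 v
          rw [h0] at this
          exact this
        rw [hfix]; exact (hfix_iff v hfix).symm
      | succ N ih =>
        intro v hv
        by_cases hfx : c v = v
        · rw [hfx]; exact (hfix_iff v hfx).symm
        · have hfx' : c' v ≠ v := by
            intro h
            -- symmetric of hfix_iff
            have h1 : c'^[n] v = v := Function.iterate_fixed h n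
            have h2 : c^[n] v = v := by rw [congrFun hroot v, h1]
            obtain ⟨m, hm⟩ : ∃ m, n = m + 1 := ⟨n - 1, by have := v.pos; omega⟩
            exact hfx (hc.2 v m (by rw [← hm]; exact h2))
          have hadj : (Hc c).Adj v (c v) := adj_self_c hfx
          have hadj' : (Hc c').Adj v (c v) := hH ▸ hadj
          rcases hadj'.1 with h1 | h1
          · exact h1.symm
          · exfalso
            have hht : ht hc.2 (c v) ≤ N := by
              have := ht_succ hc.2 hfx
              omega
            have h2 := ih (c v) hht
            apply hfx
            refine hc.2 v 1 ?_
            show c (c (c^[0] v)) = v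
            rw [Function.iterate_zero_apply, h2, h1]
    funext v
    exact main (ht hc.2 v) v le_rfl
  subst hcc
  have hcoleq := eq_of_heq hcol
  refine Sigma.ext ?_ ?_
  · simp only [Subtype.ext_iff]
  · apply heq_of_eq
    funext i
    have h1 := congrFun hcoleq ((edgeEquiv hc.2) i)
    simpa [Equiv.symm_apply_apply] using h1

lemma RCF_ext {V : Type*} {G' : SimpleGraph V} {k' : ℕ} (F F' : RootedColoredForest G' k')
    (hH : F.H = F'.H) (hr : F.root = F'.root)
    (hcol : ∀ e : F.H.edgeSet, F.color e = F'.color ⟨e.1, hH ▸ e.2⟩) : F = F' := by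
  obtain ⟨H1, le1, ac1, r1, rr1, rc1, col1⟩ := F
  obtain ⟨H2, le2, ac2, r2, rr2, rc2, col2⟩ := F'
  dsimp at hH hr hcol
  subst hH
  subst hr
  have hcc : col1 = col2 := by
    funext e
    exact hcol e
  subst hcc
  rfl

lemma Psi_surjective : Function.Surjective (Psi G k) := by
  rintro ⟨H, hle, hacyc, root, hreach, hrc, colF⟩
  classical
  have pu := SimpleGraph.isAcyclic_iff_path_unique.mp hacyc
  -- canonical path to the root
  let pa : (v : Fin n) → H.Path v (root v) := fun v => (hreach v).some.toPath
  -- parent map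
  let c : Fin n → Fin n := fun v =>
    if v = root v then v else (pa v : H.Walk v (root v)).getVert 1
  have hc_fix : ∀ v, v = root v → c v = v := by
    intro v hv
    simp only [c, if_pos hv]
  have hc_ne : ∀ v, v ≠ root v → c v = (pa v : H.Walk v (root v)).getVert 1 := by
    intro v hv
    simp only [c, if_neg hv]
  have hA : ∀ v, v ≠ root v → c v ≠ v ∧ H.Adj v (c v) := by
    intro v hv
    have hnn : ¬ (pa v : H.Walk v (root v)).Nil := SimpleGraph.Walk.not_nil_of_ne hv
    have hadj : H.Adj v ((pa v : H.Walk v (root v)).getVert 1) :=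
      (pa v : H.Walk v (root v)).adj_snd hnn
    rw [← hc_ne v hv] at hadj
    exact ⟨hadj.ne', hadj⟩
  have hfix_iff : ∀ v, c v = v ↔ v = root v := by
    intro v
    constructor
    · intro h
      by_contra hv
      exact (hA v hv).1 h
    · exact hc_fix v
  have hroot_adj : ∀ v, v ≠ root v → root (c v) = root v := by
    intro v hv
    exact hrc (c v) v ((hA v hv).2.symm.reachable)
  -- length decreases
  have hln : ∀ v, v ≠ root v →
      (pa (c v) : H.Walk (c v) (root (c v))).length + 1
        = (pa v : H.Walk v (root v)).length := by
    intro v hv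
    have hnn : ¬ (pa v : H.Walk v (root v)).Nil := SimpleGraph.Walk.not_nil_of_ne hv
    have hcv : (pa v : H.Walk v (root v)).getVert 1 = c v := (hc_ne v hv).symm
    have hr : root v = root (c v) := (hroot_adj v hv).symm
    have htail : ((pa v : H.Walk v (root v)).tail.copy hcv hr).IsPath := by
      simp only [SimpleGraph.Walk.isPath_copy]
      exact (pa v).2.tail
    have heq : pa (c v) = ⟨(pa v : H.Walk v (root v)).tail.copy hcv hr, htail⟩ := pu _ _
    rw [heq]
    simp only [SimpleGraph.Walk.length_copy]
    exact SimpleGraph.Walk.length_tail_add_one hnn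
  -- acyclicity of c
  have hacyc_c : Acyc c := by
    intro x m hper
    by_contra hne
    have hnofix : ∀ t, t ≤ m + 1 → c (c^[t] x) ≠ c^[t] x := by
      intro t ht hfixpt
      have hx : x = c^[t] x := by
        conv_lhs => rw [← hper]
        have hmt : m + 1 = (m + 1 - t) + t := by omega
        rw [hmt, Function.iterate_add_apply, Function.iterate_fixed hfixpt]
      apply hne
      rw [hx] at hne ⊢
      exact hfixpt
    have hdec : ∀ t, t ≤ m + 1 →
        (pa (c^[t] x) : H.Walk (c^[t] x) (root (c^[t] x))).length + t
          ≤ (pa x : H.Walk x (root x)).length := by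
      intro t
      induction t with
      | zero => intro _; simp
      | succ t ih =>
        intro ht
        have h1 := ih (by omega)
        have hnr : c^[t] x ≠ root (c^[t] x) := by
          intro h
          exact hnofix t (by omega) (hc_fix _ h)
        have h2 := hln (c^[t] x) hnr
        rw [Function.iterate_succ_apply']
        omega
    have := hdec (m + 1) le_rfl
    rw [hper] at this
    omega
  -- every edge of H is a parent edge
  have step : ∀ u v, H.Adj u v → u ∉ (pa v : H.Walk v (root v)).support → c u = v := by
    intro u v huv hnot
    have hr : root u = root v := hrc u v huv.reachable
    have hne : u ≠ root u := by
      intro h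
      apply hnot
      have h2 : u = root v := h.trans hr
      rw [h2]
      exact SimpleGraph.Walk.end_mem_support _
    have hwpath : ((SimpleGraph.Walk.cons huv (pa v)).copy rfl hr.symm).IsPath := by
      rw [SimpleGraph.Walk.isPath_copy]
      exact (pa v).2.cons hnot
    have heq : pa u = ⟨(SimpleGraph.Walk.cons huv (pa v)).copy rfl hr.symm, hwpath⟩ := pu _ _
    rw [hc_ne u hne, heq]
    simp only [SimpleGraph.Walk.getVert_copy, SimpleGraph.Walk.getVert_cons_succ,
      SimpleGraph.Walk.getVert_zero]
  -- every edge is a parent edge (in one of the two directions)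
  have hT : ∀ a b, H.Adj a b → c a = b ∨ c b = a := by
    intro a b hab
    have hrab : root a = root b := hrc a b hab.reachable
    by_cases hmem : a ∈ (pa b : H.Walk b (root b)).support
    · right
      apply step b a hab.symm
      intro hbmem
      have hdps : ((pa b : H.Walk b (root b)).dropUntil a hmem).IsPath :=
        (pa b).2.dropUntil hmem
      have heq : pa a = ⟨((pa b : H.Walk b (root b)).dropUntil a hmem).copy rfl hrab.symm, by
          rw [SimpleGraph.Walk.isPath_copy]; exact hdps⟩ := pu _ _
      have hbd : b ∈ ((pa b : H.Walk b (root b)).dropUntil a hmem).support := by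
        have h3 := congrArg (fun p : H.Path a (root a) => (p : H.Walk a (root a)).support) heq
        simp only [SimpleGraph.Walk.support_copy] at h3
        rw [← h3]
        exact hbmem
      have hbtail : b ∈ ((pa b : H.Walk b (root b)).dropUntil a hmem).support.tail := by
        have hcons := SimpleGraph.Walk.support_eq_cons
          ((pa b : H.Walk b (root b)).dropUntil a hmem)
        rw [hcons] at hbd
        rcases List.eq_or_mem_of_mem_cons hbd with h | h
        · exact absurd h.symm hab.ne
        · exact h
      have hbtake : b ∈ ((pa b : H.Walk b (root b)).takeUntil a hmem).support :=
        SimpleGraph.Walk.start_mem_support _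
      have hspec := SimpleGraph.Walk.take_spec (pa b : H.Walk b (root b)) hmem
      have hnodup := (pa b).2.support_nodup
      rw [← hspec, SimpleGraph.Walk.support_append, List.nodup_append] at hnodup
      exact hnodup.2.2 b hbtake b hbtail rfl
    · left
      exact step a b hab hmem
  -- the roots agree
  have hroots : ∀ v, c^[n] v = root v := by
    have main : ∀ m v, (pa v : H.Walk v (root v)).length ≤ m → c^[m] v = root v := by
      intro m
      induction m with
      | zero =>
        intro v hv
        exact SimpleGraph.Walk.eq_of_length_eq_zero (Nat.le_zero.mp hv)
      | succ m ih =>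
        intro v hv
        by_cases h : v = root v
        · rw [Function.iterate_fixed (hc_fix v h) (m + 1)]
          exact h
        · rw [Function.iterate_succ_apply]
          have h1 := hln v h
          have h2 := ih (c v) (by omega)
          rw [h2, hroot_adj v h]
    intro v
    apply main
    have hlt := (pa v).2.length_lt
    simp only [Fintype.card_fin] at hlt
    omega
  -- the graphs agree
  have hHeq : Hc c = H := by
    ext a b
    constructor
    · rintro ⟨h1 | h1, hne⟩
      · have ha : a ≠ root a := by
          intro h
          rw [hc_fix a h] at h1
          exact hne h1
        exact h1 ▸ (hA a ha).2
      · have hb : b ≠ root b := by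
          intro h
          rw [hc_fix b h] at h1
          exact hne h1.symm
        exact (h1 ▸ (hA b hb).2).symm
    · intro hab
      rcases hT a b hab with h | h
      · exact ⟨Or.inl h, hab.ne⟩
      · exact ⟨Or.inr h, hab.ne⟩
  -- assemble the preimage
  have hGood : Good G c := by
    refine ⟨fun i hi => ?_, hacyc_c⟩
    have hi' : i ≠ root i := fun h => hi (hc_fix i h)
    exact hle (hA i hi').2
  let col : {i : Fin n // c i ≠ i} → Fin k := fun i =>
    colF ⟨s(i.1, c i.1), by
      rw [SimpleGraph.mem_edgeSet]
      exact (hA i.1 (fun h => i.2 (hc_fix _ h))).2⟩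
  refine ⟨⟨⟨c, hGood⟩, col⟩, RCF_ext _ _ hHeq (funext hroots) ?_⟩
  intro e
  show colF _ = colF ⟨e.1, hHeq ▸ e.2⟩
  refine congrArg colF (Subtype.ext ?_)
  show s(((edgeEquiv hacyc_c).symm e).1, c ((edgeEquiv hacyc_c).symm e).1) = e.1
  have hfe : (edgeEquiv hacyc_c) ((edgeEquiv hacyc_c).symm e) = e := Equiv.apply_symm_apply _ _
  exact congrArg Subtype.val hfe

end Bij

section Count

variable (G : SimpleGraph (Fin n)) (k : ℕ)

set_option maxHeartbeats 1000000 in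
lemma card_forests [DecidablePred (Good G)] :
    Nat.card (RootedColoredForest G k)
      = ∑ c ∈ Finset.univ.filter (Good G),
          k ^ #(Finset.univ.filter fun i => c i ≠ i) := by
  classical
  have hbij : Function.Bijective (Psi G k) := ⟨Psi_injective G k, Psi_surjective G k⟩
  haveI : Fintype {c : Fin n → Fin n // Good G c} := Subtype.fintype _
  calc Nat.card (RootedColoredForest G k)
      = Nat.card (Σ c : {c : Fin n → Fin n // Good G c},
          ({i : Fin n // c.1 i ≠ i} → Fin k)) := (Nat.card_eq_of_bijective _ hbij).symm
    _ = ∑ c : {c : Fin n → Fin n // Good G c},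
          k ^ #(Finset.univ.filter fun i => c.1 i ≠ i) := by
        rw [Nat.card_eq_fintype_card, Fintype.card_sigma]
        refine Finset.sum_congr rfl fun c _ => ?_
        rw [Fintype.card_fun, Fintype.card_fin, Fintype.card_subtype]
    _ = ∑ c ∈ Finset.univ.filter (Good G),
          k ^ #(Finset.univ.filter fun i => c i ≠ i) := by
        rw [Finset.sum_subtype (p := Good G) (Finset.univ.filter (Good G))
          (fun x => by simp) (fun c => k ^ #(Finset.univ.filter fun i => c i ≠ i))]

end Count

end RCFAux

theorem det_one_add_smul_lapMatrix_eq_card_colored_forests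
    {n : ℕ} (G : SimpleGraph (Fin n)) [DecidableRel G.Adj] (k : ℕ) (hk : 0 < k) :
    (1 + (k : ℤ) • G.lapMatrix ℤ).det = Nat.card (RootedColoredForest G k) := by
  classical
  rw [RCFAux.det_side G k, RCFAux.card_forests G k]
  push_cast
  rfl
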